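/- Let w = (w₁, …, w_N) be a finite sequence of distinct elements of a linearly ordered set, and let λ be the common shape of the pair of standard Young tableaux produced by the Robinson–Schensted insertion algorithm applied to w. Then the number of rows of λ equals the length of a longest strictly decreasing subsequence of w. -/

import Mathlib

variable {α : Type*} [LinearOrder α]

/-- Schensted row insertion: insert `x` into a row, returning the new row and the
bumped element (if any). -/
def rowInsert : List α → α → List α × Option α
  | [], x => ([x], none)
  | a :: as, x =>
    if x < a then (x :: as, some a)
    else
      let r := rowInsert as x
      (a :: r.1, r.2)

/-- Schensted insertion of an entry into a tableau (given as its list of rows),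
recursively bumping entries into lower rows. -/
def tabInsert : List (List α) → α → List (List α)
  | [], x => [[x]]
  | r :: rs, x =>
    match rowInsert r x with
    | (r', none) => r' :: rs
    | (r', some b) => r' :: tabInsert rs b

/-- The Robinson–Schensted insertion tableau of a word `w`, given as its list of rows;
its shape is the common shape `λ` of the pair `(P, Q)` of standard Young tableaux
produced by the Robinson–Schensted algorithm. -/
def RSTableau (w : List α) : List (List α) := w.foldl tabInsert []

/-! ### Auxiliary lemmas about `rowInsert` -/

theorem rowInsert_spec (r : List α) (z : α) :
    ((rowInsert r z).2 = none ∧ (rowInsert r z).1 = r ++ [z] ∧ ∀ e ∈ r, ¬ z < e) ∨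
    (∃ b p q, (rowInsert r z).2 = some b ∧ r = p ++ b :: q ∧
      (rowInsert r z).1 = p ++ z :: q ∧ (∀ e ∈ p, ¬ z < e) ∧ z < b) := by
  induction r with
  | nil => left; simp [rowInsert]
  | cons a as ih =>
    by_cases h : z < a
    · right
      exact ⟨a, [], as, by simp [rowInsert, h], by simp, by simp [rowInsert, h], by simp, h⟩
    · have e1 : (rowInsert (a :: as) z).1 = a :: (rowInsert as z).1 := by
        simp [rowInsert, h]
      have e2 : (rowInsert (a :: as) z).2 = (rowInsert as z).2 := by
        simp [rowInsert, h]
      rcases ih with ⟨h2, h1, hall⟩ | ⟨b, p, q, h2, hr, h1, hp, hzb⟩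
      · left
        refine ⟨by rw [e2]; exact h2, by rw [e1, h1]; simp, ?_⟩
        intro e he
        rcases List.mem_cons.1 he with rfl | he
        · exact h
        · exact hall e he
      · right
        refine ⟨b, a :: p, q, by rw [e2]; exact h2, by rw [hr]; simp,
          by rw [e1, h1]; simp, ?_, hzb⟩
        intro e he
        rcases List.mem_cons.1 he with rfl | he
        · exact h
        · exact hp e he

theorem rowInsert_none {r : List α} {z : α} (h : (rowInsert r z).2 = none) :
    (rowInsert r z).1 = r ++ [z] ∧ ∀ e ∈ r, ¬ z < e := by
  rcases rowInsert_spec r z with ⟨_, h1, hall⟩ | ⟨b, p, q, h2, _⟩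
  · exact ⟨h1, hall⟩
  · rw [h2] at h; cases h

theorem rowInsert_some {r : List α} {z b : α} (h : (rowInsert r z).2 = some b) :
    ∃ p q, r = p ++ b :: q ∧ (rowInsert r z).1 = p ++ z :: q ∧
      (∀ e ∈ p, ¬ z < e) ∧ z < b := by
  rcases rowInsert_spec r z with ⟨h2, _⟩ | ⟨b', p, q, h2, hr, h1, hp, hzb⟩
  · rw [h2] at h; cases h
  · rw [h2] at h
    injection h with h
    subst h
    exact ⟨p, q, hr, h1, hp, hzb⟩

theorem mem_rowInsert_self (r : List α) (z : α) : z ∈ (rowInsert r z).1 := by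
  rcases rowInsert_spec r z with ⟨_, h1, _⟩ | ⟨b, p, q, _, _, h1, _⟩ <;> rw [h1] <;> simp

theorem mem_rowInsert {r : List α} {z e : α} (he : e ∈ (rowInsert r z).1) :
    e = z ∨ e ∈ r := by
  rcases rowInsert_spec r z with ⟨_, h1, _⟩ | ⟨b, p, q, _, hr, h1, _⟩
  · rw [h1] at he
    rcases List.mem_append.1 he with h | h
    · exact Or.inr h
    · simp at h; exact Or.inl h
  · rw [h1] at he
    rcases List.mem_append.1 he with h | h
    · exact Or.inr (by rw [hr]; exact List.mem_append_left _ h)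
    · rcases List.mem_cons.1 h with h | h
      · exact Or.inl h
      · exact Or.inr (by rw [hr]; exact List.mem_append_right _ (List.mem_cons_of_mem _ h))

theorem mem_rowInsert_of_ne {r : List α} {z v b : α} (hv : v ∈ r)
    (h : (rowInsert r z).2 = some b) (hne : v ≠ b) : v ∈ (rowInsert r z).1 := by
  obtain ⟨p, q, hr, h1, _, _⟩ := rowInsert_some h
  rw [h1]
  rw [hr] at hv
  rcases List.mem_append.1 hv with h' | h'
  · exact List.mem_append_left _ h'
  · rcases List.mem_cons.1 h' with h' | h'
    · exact absurd h' hne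
    · exact List.mem_append_right _ (List.mem_cons_of_mem _ h')

theorem rowInsert_mem_none {r : List α} {z v : α} (hv : v ∈ r)
    (h : (rowInsert r z).2 = none) : v ∈ (rowInsert r z).1 := by
  rw [(rowInsert_none h).1]; exact List.mem_append_left _ hv

theorem rowInsert_bump_lt {r : List α} {z b : α} (h : (rowInsert r z).2 = some b) : z < b :=
  (rowInsert_some h).choose_spec.choose_spec.2.2.2

theorem rowInsert_bump_mem {r : List α} {z b : α} (h : (rowInsert r z).2 = some b) : b ∈ r := by
  obtain ⟨p, q, hr, _⟩ := rowInsert_some h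
  rw [hr]; exact List.mem_append_right _ (List.mem_cons_self)

theorem rowInsert_bump_min {r : List α} {z b : α} (hs : r.Pairwise (· ≤ ·))
    (h : (rowInsert r z).2 = some b) : ∀ v ∈ r, z < v → b ≤ v := by
  obtain ⟨p, q, hr, _, hp, _⟩ := rowInsert_some h
  intro v hv hzv
  rw [hr] at hv hs
  rcases List.mem_append.1 hv with h' | h'
  · exact absurd hzv (hp v h')
  · rcases List.mem_cons.1 h' with h' | h'
    · exact le_of_eq h'.symm
    · exact List.rel_of_pairwise_cons (List.pairwise_append.1 hs).2.1 h'

theorem rowInsert_bump_exists {r : List α} {z v : α} (hv : v ∈ r) (hzv : z < v) :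
    ∃ b, (rowInsert r z).2 = some b := by
  cases h : (rowInsert r z).2 with
  | none => exact absurd hzv ((rowInsert_none h).2 v hv)
  | some b => exact ⟨b, rfl⟩

theorem rowInsert_sorted {r : List α} (z : α) (hs : r.Pairwise (· ≤ ·)) :
    ((rowInsert r z).1).Pairwise (· ≤ ·) := by
  rcases rowInsert_spec r z with ⟨_, h1, hall⟩ | ⟨b, p, q, _, hr, h1, hp, hzb⟩
  · rw [h1]
    rw [List.pairwise_append]
    exact ⟨hs, List.pairwise_singleton _ _,
      fun a ha e he => by simp at he; subst he; exact le_of_not_gt (hall a ha)⟩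
  · rw [h1]
    rw [hr] at hs
    rw [List.pairwise_append] at hs ⊢
    obtain ⟨hsp, hsbq, hcross⟩ := hs
    rw [List.pairwise_cons] at hsbq ⊢
    refine ⟨hsp, ⟨fun e he => le_trans hzb.le (hsbq.1 e he), hsbq.2⟩, ?_⟩
    intro a ha e he
    rcases List.mem_cons.1 he with rfl | he
    · exact le_of_not_gt (hp a ha)
    · exact hcross a ha e (List.mem_cons_of_mem _ he)

/-! ### The bump word of a row -/

/-- Processing the word `u` through a single row starting at row contents `r`:
the final row contents. -/
def rowRun : List α → List α → List α
  | r, [] => r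
  | r, z :: u => rowRun (rowInsert r z).1 u

/-- Processing the word `u` through a single row starting at row contents `r`:
the word of bumped entries (in chronological order). -/
def rowBumps : List α → List α → List α
  | _, [] => []
  | r, z :: u =>
    match (rowInsert r z).2 with
    | none => rowBumps (rowInsert r z).1 u
    | some b => b :: rowBumps (rowInsert r z).1 u

theorem rowBumps_cons_none {r : List α} {z : α} (u : List α)
    (h : (rowInsert r z).2 = none) :
    rowBumps r (z :: u) = rowBumps (rowInsert r z).1 u := by
  simp [rowBumps, h]

theorem rowBumps_cons_some {r : List α} {z b : α} (u : List α)
    (h : (rowInsert r z).2 = some b) :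
    rowBumps r (z :: u) = b :: rowBumps (rowInsert r z).1 u := by
  simp [rowBumps, h]

theorem rowBumps_sublist_cons {r : List α} {z : α} (u : List α) {l : List α}
    (h : l.Sublist (rowBumps (rowInsert r z).1 u)) : l.Sublist (rowBumps r (z :: u)) := by
  cases h' : (rowInsert r z).2 with
  | none => rw [rowBumps_cons_none u h']; exact h
  | some b => rw [rowBumps_cons_some u h']; exact h.cons b

theorem rowBumps_length_le : ∀ (u r : List α), (rowBumps r u).length ≤ u.length
  | [], r => by simp [rowBumps]
  | z :: u, r => by
    cases h : (rowInsert r z).2 with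
    | none =>
      rw [rowBumps_cons_none u h]
      exact (rowBumps_length_le u _).trans (by simp)
    | some b =>
      rw [rowBumps_cons_some u h]
      simpa using rowBumps_length_le u _

theorem rowBumps_append_rowRun_perm :
    ∀ (u r : List α), (rowBumps r u ++ rowRun r u).Perm (r ++ u)
  | [], r => by simp [rowBumps, rowRun]
  | z :: u, r => by
    cases h : (rowInsert r z).2 with
    | none =>
      rw [rowBumps_cons_none u h, rowRun]
      refine (rowBumps_append_rowRun_perm u _).trans ?_
      rw [(rowInsert_none h).1, List.append_assoc]
      exact List.Perm.append_left r (by simpa using List.perm_middle)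
    | some b =>
      obtain ⟨p, q, hr, h1, -, -⟩ := rowInsert_some h
      rw [rowBumps_cons_some u h, rowRun, h1]
      have ih := rowBumps_append_rowRun_perm u (p ++ z :: q)
      subst hr
      refine List.Perm.trans (List.Perm.cons b ih) ?_
      have e1 : (p ++ z :: q) ++ u = p ++ z :: (q ++ u) := by simp
      have e2 : (p ++ b :: q) ++ z :: u = p ++ b :: (q ++ z :: u) := by simp
      rw [e1, e2]
      exact (List.Perm.cons b
        (List.Perm.append_left p (List.perm_middle (a := z) (l₁ := q) (l₂ := u)).symm)).trans
        List.perm_middle.symm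

theorem rowBumps_nodup {r u : List α} (h : (r ++ u).Nodup) : (rowBumps r u).Nodup :=
  (((rowBumps_append_rowRun_perm u r).nodup_iff.2 h)).of_append_left

/-! ### Structure of the full tableau insertion -/

theorem tabInsert_cons_none {r : List α} {z : α} (t : List (List α))
    (h : (rowInsert r z).2 = none) :
    tabInsert (r :: t) z = (rowInsert r z).1 :: t := by
  have e : rowInsert r z = ((rowInsert r z).1, (none : Option α)) := by
    rw [← h]
  simp only [tabInsert]
  rw [e]

theorem tabInsert_cons_some {r : List α} {z b : α} (t : List (List α))
    (h : (rowInsert r z).2 = some b) :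
    tabInsert (r :: t) z = (rowInsert r z).1 :: tabInsert t b := by
  have e : rowInsert r z = ((rowInsert r z).1, some b) := by
    rw [← h]
  simp only [tabInsert]
  rw [e]

theorem foldl_tabInsert : ∀ (u r : List α) (t : List (List α)),
    List.foldl tabInsert (r :: t) u = rowRun r u :: List.foldl tabInsert t (rowBumps r u)
  | [], r, t => by simp [rowRun, rowBumps]
  | z :: u, r, t => by
    cases h : (rowInsert r z).2 with
    | none =>
      rw [List.foldl_cons, tabInsert_cons_none t h, foldl_tabInsert u _ t,
        rowBumps_cons_none u h]
      rfl
    | some b =>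
      rw [List.foldl_cons, tabInsert_cons_some t h, foldl_tabInsert u _ _,
        rowBumps_cons_some u h]
      rfl

theorem RSTableau_cons (z : α) (w : List α) :
    RSTableau (z :: w) = rowRun [z] w :: RSTableau (rowBumps [z] w) := by
  show List.foldl tabInsert [] (z :: w) = _
  rw [List.foldl_cons]
  have h : tabInsert ([] : List (List α)) z = [[z]] := rfl
  rw [h, foldl_tabInsert w [z] []]
  rfl

theorem rowBumps_nil_cons (z : α) (w : List α) :
    rowBumps ([] : List α) (z :: w) = rowBumps [z] w := by
  have h : (rowInsert ([] : List α) z).2 = none := rfl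
  rw [rowBumps_cons_none w h]
  rfl

/-! ### Lifting a decreasing sequence of bumps to the original word -/

theorem lift_main (u : List α) :
    (∀ (r bs : List α), r.Pairwise (· ≤ ·) → bs.Chain' (· > ·) → bs.Sublist (rowBumps r u) →
      ∃ xs : List α, xs.Sublist u ∧ xs.Chain' (· > ·) ∧ xs.length = bs.length ∧
        (∀ x b, xs.head? = some x → bs.head? = some b → x < b)) ∧
    (∀ (r : List α) (b : α) (bs : List α), r.Pairwise (· ≤ ·) → (b :: bs).Chain' (· > ·) →
      (b :: bs).Sublist (rowBumps r u) → b ∉ r →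
      ∃ xs : List α, (b :: xs).Sublist u ∧ (b :: xs).Chain' (· > ·) ∧
        xs.length = (b :: bs).length) := by
  induction u with
  | nil =>
    constructor
    · intro r bs _ _ hsub
      have hbs : bs = [] := List.sublist_nil.mp (by simpa [rowBumps] using hsub)
      subst hbs
      exact ⟨[], by simp, List.isChain_nil, rfl, by simp⟩
    · intro r b bs _ _ hsub _
      have : (b :: bs) = [] := List.sublist_nil.mp (by simpa [rowBumps] using hsub)
      cases this
  | cons z u ih =>
    obtain ⟨ihC, ihF⟩ := ih
    constructor
    · -- CORE
      intro r bs hs hch hsub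
      cases bs with
      | nil => exact ⟨[], by simp, List.isChain_nil, rfl, by simp⟩
      | cons b bs' =>
        cases h : (rowInsert r z).2 with
        | none =>
          rw [rowBumps_cons_none u h] at hsub
          obtain ⟨xs, h1, h2, h3, h4⟩ := ihC _ _ (rowInsert_sorted z hs) hch hsub
          exact ⟨xs, h1.cons z, h2, h3, h4⟩
        | some b0 =>
          rw [rowBumps_cons_some u h] at hsub
          rcases List.sublist_cons_iff.mp hsub with hsub' | ⟨bs₂, heq, hsub'⟩
          · obtain ⟨xs, h1, h2, h3, h4⟩ := ihC _ _ (rowInsert_sorted z hs) hch hsub'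
            exact ⟨xs, h1.cons z, h2, h3, h4⟩
          · obtain ⟨rfl, rfl⟩ := List.cons_eq_cons.mp heq
            cases bs' with
            | nil =>
              refine ⟨[z], (List.nil_sublist u).cons₂ z, List.isChain_singleton z, by simp, ?_⟩
              intro x bb hx hb
              simp at hx hb
              subst hx; subst hb
              exact rowInsert_bump_lt h
            | cons b₂ bs'' =>
              by_cases hmem : b₂ ∈ (rowInsert r z).1
              · -- b₂ is at most z
                have hb2z : b₂ ≤ z := by
                  obtain ⟨p, q, hr, h1, hp, _⟩ := rowInsert_some h
                  rw [h1] at hmem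
                  rcases List.mem_append.1 hmem with h' | h'
                  · exact le_of_not_gt (hp _ h')
                  · rcases List.mem_cons.1 h' with h' | h'
                    · exact le_of_eq h'
                    · exfalso
                      have hble : b ≤ b₂ := by
                        rw [hr, List.pairwise_append] at hs
                        exact List.rel_of_pairwise_cons hs.2.1 h'
                      exact absurd (List.isChain_cons_cons.1 hch).1 (not_lt.2 hble)
                obtain ⟨ys, h1, h2, h3, h4⟩ := ihC _ _ (rowInsert_sorted z hs) hch.tail hsub'
                refine ⟨z :: ys, h1.cons₂ z, ?_, by simp [h3], ?_⟩
                · refine List.isChain_cons.2 ?_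
                  refine ⟨?_, h2⟩
                  intro y hy
                  have : y < b₂ := h4 y b₂ hy rfl
                  exact lt_of_lt_of_le this hb2z
                · intro x bb hx hb
                  simp at hx hb
                  subst hx; subst hb
                  exact rowInsert_bump_lt h
              · obtain ⟨ys, h1, h2, h3⟩ :=
                  ihF _ b₂ bs'' (rowInsert_sorted z hs) hch.tail hsub' hmem
                refine ⟨b₂ :: ys, h1.cons z, h2, by simpa using h3, ?_⟩
                intro x bb hx hb
                simp at hx hb
                subst hx; subst hb
                exact (List.isChain_cons_cons.1 hch).1
        -- end CORE cons
    · -- FULL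
      intro r b bs hs hch hsub hnotin
      cases h : (rowInsert r z).2 with
      | none =>
        rw [rowBumps_cons_none u h] at hsub
        by_cases hbz : b = z
        · subst hbz
          obtain ⟨xs, h1, h2, h3, h4⟩ := ihC _ _ (rowInsert_sorted b hs) hch hsub
          refine ⟨xs, h1.cons₂ b, ?_, h3⟩
          refine List.isChain_cons.2 ?_
          exact ⟨fun y hy => h4 y b hy rfl, h2⟩
        · have hnotin' : b ∉ (rowInsert r z).1 := by
            intro hb
            rcases mem_rowInsert hb with h' | h'
            · exact hbz h'
            · exact hnotin h'
          obtain ⟨xs, h1, h2, h3⟩ := ihF _ b bs (rowInsert_sorted z hs) hch hsub hnotin'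
          exact ⟨xs, h1.cons z, h2, h3⟩
      | some b0 =>
        rw [rowBumps_cons_some u h] at hsub
        have hbb0 : b ≠ b0 := fun e => hnotin (e ▸ rowInsert_bump_mem h)
        have hsub' : (b :: bs).Sublist (rowBumps (rowInsert r z).1 u) := by
          rcases List.sublist_cons_iff.mp hsub with h' | ⟨t, ht, h'⟩
          · exact h'
          · exact absurd (List.cons_eq_cons.mp ht).1 hbb0
        by_cases hbz : b = z
        · subst hbz
          obtain ⟨xs, h1, h2, h3, h4⟩ := ihC _ _ (rowInsert_sorted b hs) hch hsub'
          refine ⟨xs, h1.cons₂ b, ?_, h3⟩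
          refine List.isChain_cons.2 ?_
          exact ⟨fun y hy => h4 y b hy rfl, h2⟩
        · have hnotin' : b ∉ (rowInsert r z).1 := by
            intro hb
            rcases mem_rowInsert hb with h' | h'
            · exact hbz h'
            · exact hnotin h'
          obtain ⟨xs, h1, h2, h3⟩ := ihF _ b bs (rowInsert_sorted z hs) hch hsub' hnotin'
          exact ⟨xs, h1.cons z, h2, h3⟩

/-! ### Producing a decreasing sequence of bumps from a decreasing subsequence -/

theorem drop_main (u : List α) (hnd : u.Nodup) :
    (∀ (r : List α) (v : α) (xs : List α), r.Pairwise (· ≤ ·) → v ∈ r →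
      (v :: xs).Chain' (· > ·) → xs.Sublist u →
      ∃ bs : List α, bs.Sublist (rowBumps r u) ∧ bs.Chain' (· > ·) ∧
        bs.length = xs.length ∧ ∀ e ∈ bs, e ≤ v) ∧
    (∀ (r : List α) (x : α) (xs : List α), r.Pairwise (· ≤ ·) →
      (x :: xs).Chain' (· > ·) → (x :: xs).Sublist u →
      ∃ bs : List α, bs.Sublist (rowBumps r u) ∧ bs.Chain' (· > ·) ∧
        bs.length = xs.length ∧ ∀ e ∈ bs, e ≤ x) := by
  induction u with
  | nil =>
    constructor
    · intro r v xs _ _ _ hsub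
      have hxs : xs = [] := List.sublist_nil.mp hsub
      subst hxs
      exact ⟨[], by simp [rowBumps], List.isChain_nil, rfl, by simp⟩
    · intro r x xs _ _ hsub
      cases List.sublist_nil.mp hsub
  | cons z u ih =>
    have hz : z ∉ u := (List.nodup_cons.mp hnd).1
    have hnd' : u.Nodup := (List.nodup_cons.mp hnd).2
    obtain ⟨ihW, ihN⟩ := ih hnd'
    constructor
    · -- WIT
      intro r v xs hs hv hch hsub
      cases xs with
      | nil => exact ⟨[], List.nil_sublist _, List.isChain_nil, rfl, by simp⟩
      | cons x xs' =>
        rcases List.sublist_cons_iff.mp hsub with hsub' | ⟨t, ht, hsub'⟩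
        · -- not consumed
          cases h : (rowInsert r z).2 with
          | none =>
            obtain ⟨bs, h1, h2, h3, h4⟩ := ihW _ v _ (rowInsert_sorted z hs)
              (rowInsert_mem_none hv h) hch hsub'
            rw [rowBumps_cons_none u h]
            exact ⟨bs, h1, h2, h3, h4⟩
          | some b0 =>
            rw [rowBumps_cons_some u h]
            by_cases hb0v : b0 = v
            · subst hb0v
              have hzv : z < b0 := rowInsert_bump_lt h
              have hxmem : x ∈ u := hsub'.subset (List.mem_cons_self)
              have hzx : z ≠ x := fun e => hz (e ▸ hxmem)
              rcases lt_or_gt_of_ne hzx with hzx' | hzx'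
              · -- z < x : emit the witness b0 = v
                obtain ⟨bs, h1, h2, h3, h4⟩ := ihN _ x xs' (rowInsert_sorted z hs)
                  hch.tail hsub'
                have hxv : x < b0 := (List.isChain_cons_cons.1 hch).1
                refine ⟨b0 :: bs, h1.cons₂ b0, ?_, by simp [h3], ?_⟩
                · refine List.isChain_cons.2 ?_
                  refine ⟨fun y hy => ?_, h2⟩
                  exact lt_of_le_of_lt (h4 y (List.mem_of_mem_head? hy)) hxv
                · intro e he
                  rcases List.mem_cons.1 he with rfl | he
                  · exact le_rfl
                  · exact ((h4 e he).trans hxv.le)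
              · -- x < z : the newly inserted z becomes the witness
                have hch2 : (z :: x :: xs').Chain' (· > ·) :=
                  List.isChain_cons_cons.2 ⟨hzx', hch.tail⟩
                obtain ⟨bs, h1, h2, h3, h4⟩ := ihW _ z _ (rowInsert_sorted z hs)
                  (mem_rowInsert_self r z) hch2 hsub'
                exact ⟨bs, h1.cons b0, h2, h3, fun e he => (h4 e he).trans hzv.le⟩
            · -- witness survives
              obtain ⟨bs, h1, h2, h3, h4⟩ := ihW _ v _ (rowInsert_sorted z hs)
                (mem_rowInsert_of_ne hv h (fun e => hb0v e.symm)) hch hsub'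
              exact ⟨bs, h1.cons b0, h2, h3, h4⟩
        · -- consumed : x = z
          obtain ⟨rfl, rfl⟩ : x = z ∧ xs' = t := List.cons_eq_cons.mp ht
          have hzv : x < v := (List.isChain_cons_cons.1 hch).1
          obtain ⟨b0, h⟩ := rowInsert_bump_exists hv hzv
          have hbv : b0 ≤ v := rowInsert_bump_min hs h v hv hzv
          have hxb : x < b0 := rowInsert_bump_lt h
          obtain ⟨bs, h1, h2, h3, h4⟩ := ihW _ x _ (rowInsert_sorted x hs)
            (mem_rowInsert_self r x) hch.tail hsub'
          rw [rowBumps_cons_some u h]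
          refine ⟨b0 :: bs, h1.cons₂ b0, ?_, by simp [h3], ?_⟩
          · refine List.isChain_cons.2 ?_
            exact ⟨fun y hy => lt_of_le_of_lt (h4 y (List.mem_of_mem_head? hy)) hxb, h2⟩
          · intro e he
            rcases List.mem_cons.1 he with rfl | he
            · exact hbv
            · exact (h4 e he).trans (hzv.le)
    · -- NOW
      intro r x xs hs hch hsub
      rcases List.sublist_cons_iff.mp hsub with hsub' | ⟨t, ht, hsub'⟩
      · obtain ⟨bs, h1, h2, h3, h4⟩ := ihN _ x xs (rowInsert_sorted z hs) hch hsub'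
        exact ⟨bs, rowBumps_sublist_cons u h1, h2, h3, h4⟩
      · obtain ⟨rfl, rfl⟩ : x = z ∧ xs = t := List.cons_eq_cons.mp ht
        cases xs with
        | nil => exact ⟨[], List.nil_sublist _, List.isChain_nil, rfl, by simp⟩
        | cons x₁ xs' =>
          obtain ⟨bs, h1, h2, h3, h4⟩ := ihW _ x _ (rowInsert_sorted x hs)
            (mem_rowInsert_self r x) hch hsub'
          exact ⟨bs, rowBumps_sublist_cons u h1, h2, h3, h4⟩

/-! ### Main induction -/

theorem schensted_aux : ∀ (n : ℕ) (w : List α), w.length ≤ n → w.Nodup →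
    (∃ l : List α, l.Sublist w ∧ l.Chain' (· > ·) ∧ l.length = (RSTableau w).length) ∧
    (∀ l : List α, l.Sublist w → l.Chain' (· > ·) → l.length ≤ (RSTableau w).length) := by
  intro n
  induction n with
  | zero =>
    intro w hw _
    have hwnil : w = [] := List.length_eq_zero_iff.mp (Nat.le_zero.mp hw)
    subst hwnil
    constructor
    · exact ⟨[], by simp, List.isChain_nil, rfl⟩
    · intro l hl _
      have : l = [] := List.sublist_nil.mp hl
      subst this
      simp
  | succ n ihn =>
    intro w hw hnd
    cases w with
    | nil =>
      constructor
      · exact ⟨[], by simp, List.isChain_nil, rfl⟩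
      · intro l hl _
        have : l = [] := List.sublist_nil.mp hl
        subst this
        simp
    | cons z w' =>
      have hBw : rowBumps ([] : List α) (z :: w') = rowBumps [z] w' :=
        rowBumps_nil_cons z w'
      have hlen : (RSTableau (z :: w')).length = (RSTableau (rowBumps [z] w')).length + 1 := by
        rw [RSTableau_cons]; rfl
      have hBnd : (rowBumps [z] w').Nodup := by
        apply rowBumps_nodup
        simpa using hnd
      have hBlen : (rowBumps [z] w').length ≤ n := by
        have h1 := rowBumps_length_le w' [z]
        have h2 : w'.length ≤ n := by simpa using Nat.succ_le_succ_iff.mp hw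
        omega
      obtain ⟨⟨ds, hds1, hds2, hds3⟩, hub⟩ := ihn (rowBumps [z] w') hBlen hBnd
      constructor
      · -- lower bound : a decreasing subsequence of the right length exists
        cases ds with
        | nil =>
          refine ⟨[z], (List.nil_sublist w').cons₂ z, List.isChain_singleton z, ?_⟩
          rw [hlen, ← hds3]
          rfl
        | cons d ds' =>
          have hsubB : (d :: ds').Sublist (rowBumps ([] : List α) (z :: w')) := by
            rw [hBw]; exact hds1
          obtain ⟨xs, h1, h2, h3⟩ := (lift_main (z :: w')).2 [] d ds'
            (List.Pairwise.nil) hds2 hsubB (by simp)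
          refine ⟨d :: xs, h1, h2, ?_⟩
          rw [hlen, ← hds3]
          simp [h3]
      · -- upper bound
        intro l hl hch
        cases l with
        | nil => simp
        | cons x l' =>
          obtain ⟨bs, h1, h2, h3, _⟩ := (drop_main (z :: w') hnd).2 [] x l'
            (List.Pairwise.nil) hch hl
          have hb := hub bs (by rwa [hBw] at h1) h2
          rw [hlen]
          simp only [List.length_cons]
          omega

theorem rows_RS_eq_longest_decreasing (w : List α) (hw : w.Nodup) :
    IsGreatest {n : ℕ | ∃ l : List α, l.Sublist w ∧ l.Chain' (· > ·) ∧ l.length = n}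
      (RSTableau w).length := by
  obtain ⟨⟨l, h1, h2, h3⟩, hub⟩ := schensted_aux w.length w le_rfl hw
  constructor
  · exact ⟨l, h1, h2, h3⟩
  · rintro n ⟨l, hl1, hl2, rfl⟩
    exact hub l hl1 hl2
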